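/- arXiv:1305.1798 — 3 statements merged into one kernel-verified Lean document; each statement's English description precedes it below -/
import Mathlib

section
/- If a rotation of the Euclidean plane by angle 2π/n (n ≥ 1) maps a lattice Γ ⊂ ℝ² onto itself, then n ∈ {1, 2, 3, 4, 6}. -/
open Real Matrix

private lemma aux_angle_eq (n k : ℕ) (hn : 0 < n) (hk : 0 < k)
    (h : 2 * π / (n : ℝ) = 2 * π / (k : ℝ)) : n = k := by
  have hπ := Real.pi_pos
  have hnR : (0:ℝ) < n := by positivity
  have hkR : (0:ℝ) < k := by positivity
  field_simp at h
  exact_mod_cast h.symm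

/-- Crystallographic restriction in the plane: if the rotation through `2π/n`
(`n ≥ 1`) maps a lattice `Γ ⊂ ℝ²` onto itself, then `n ∈ {1, 2, 3, 4, 6}`. -/
theorem crystallographic_restriction_plane
    (b₁ b₂ : Fin 2 → ℝ) (hb : LinearIndependent ℝ ![b₁, b₂])
    (Γ : Set (Fin 2 → ℝ))
    (hΓ : Γ = {x | ∃ m n : ℤ, x = (m : ℝ) • b₁ + (n : ℝ) • b₂})
    (n : ℕ) (hn : 1 ≤ n)
    (R : Matrix (Fin 2) (Fin 2) ℝ)
    (hR : R = !![Real.cos (2 * π / n), -Real.sin (2 * π / n);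
                 Real.sin (2 * π / n),  Real.cos (2 * π / n)])
    (hfix : R.mulVec '' Γ = Γ) :
    n ∈ ({1, 2, 3, 4, 6} : Set ℕ) := by
  have hb₁ : b₁ ∈ Γ := by
    rw [hΓ]; exact ⟨1, 0, by push_cast; simp⟩
  have hb₂ : b₂ ∈ Γ := by
    rw [hΓ]; exact ⟨0, 1, by push_cast; simp⟩
  have hRb₁ : R.mulVec b₁ ∈ Γ := hfix ▸ Set.mem_image_of_mem _ hb₁
  have hRb₂ : R.mulVec b₂ ∈ Γ := hfix ▸ Set.mem_image_of_mem _ hb₂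
  rw [hΓ] at hRb₁ hRb₂
  obtain ⟨a, b, hab⟩ := hRb₁
  obtain ⟨c, d, hcd⟩ := hRb₂
  obtain ⟨P, M, hPunit, hRP, htrM⟩ :
      ∃ (P M : Matrix (Fin 2) (Fin 2) ℝ), IsUnit P ∧
        R * P = P * M ∧ M.trace = ((a + d : ℤ) : ℝ) := by
    refine ⟨(Matrix.of ![b₁, b₂])ᵀ, !![(a:ℝ), (c:ℝ); (b:ℝ), (d:ℝ)], ?_, ?_, ?_⟩
    · rw [← Matrix.linearIndependent_cols_iff_isUnit]
      convert hb using 1 <;> rfl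
    · ext i j
      have h1 := congrFun hab i
      have h2 := congrFun hcd i
      simp [Matrix.mulVec, dotProduct, Fin.sum_univ_two, Pi.smul_apply,
        smul_eq_mul] at h1 h2
      fin_cases i <;> fin_cases j <;>
        simp [Matrix.mul_apply, Fin.sum_univ_two, Matrix.transpose_apply,
          Matrix.vecHead, Matrix.vecTail] at h1 h2 ⊢ <;>
        linarith [h1, h2]
    · rw [Matrix.trace_fin_two]; push_cast; simp
  have hPdet : IsUnit P.det := (Matrix.isUnit_iff_isUnit_det P).mp hPunit
  have hReq : R = P * M * P⁻¹ := by
    rw [← hRP, Matrix.mul_assoc, Matrix.mul_nonsing_inv _ hPdet, Matrix.mul_one]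
  have htr : R.trace = M.trace := by
    rw [hReq, Matrix.trace_mul_comm (P * M) P⁻¹, ← Matrix.mul_assoc,
      Matrix.nonsing_inv_mul _ hPdet, Matrix.one_mul]
  have htrR : R.trace = 2 * Real.cos (2 * π / n) := by
    rw [hR, Matrix.trace_fin_two]; simp; ring
  have key : 2 * Real.cos (2 * π / n) = ((a + d : ℤ) : ℝ) := by
    rw [← htrR, htr, htrM]
  obtain ⟨t, ht1', ht2', key⟩ :
      ∃ t : ℤ, -2 ≤ t ∧ t ≤ 2 ∧ 2 * Real.cos (2 * π / n) = (t : ℝ) := by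
    refine ⟨a + d, ?_, ?_, key⟩
    · have hcos1 := abs_le.mp (Real.abs_cos_le_one (2 * π / n))
      have : (-2 : ℝ) ≤ ((a + d : ℤ) : ℝ) := by rw [← key]; linarith [hcos1.1]
      exact_mod_cast this
    · have hcos1 := abs_le.mp (Real.abs_cos_le_one (2 * π / n))
      have : ((a + d : ℤ) : ℝ) ≤ 2 := by rw [← key]; linarith [hcos1.2]
      exact_mod_cast this
  have hπ := Real.pi_pos
  have hnR : (0 : ℝ) < n := by positivity
  have hnpos : 0 < n := hn
  rcases eq_or_lt_of_le hn with h1 | h2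
  · left; omega
  -- n ≥ 2 : the angle lies in (0, π]
  have hθpos : 0 < 2 * π / (n : ℝ) := by positivity
  have hθle : 2 * π / (n : ℝ) ≤ π := by
    rw [div_le_iff₀ hnR]
    have : (2 : ℝ) ≤ (n : ℝ) := by exact_mod_cast h2
    nlinarith
  have hmem : 2 * π / (n : ℝ) ∈ Set.Icc 0 π := ⟨le_of_lt hθpos, hθle⟩
  interval_cases t
  · -- t = -2 : cos θ = -1 = cos π, so θ = π, n = 2
    have hc : Real.cos (2 * π / n) = Real.cos π := by
      rw [Real.cos_pi]; push_cast at key; linarith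
    have := Real.injOn_cos hmem ⟨le_of_lt hπ, le_refl π⟩ hc
    right; left
    refine aux_angle_eq n 2 hnpos (by norm_num) ?_
    rw [this]; norm_num
  · -- t = -1 : cos θ = -1/2 = cos (2π/3), n = 3
    have hc : Real.cos (2 * π / n) = Real.cos (2 * π / 3) := by
      have : Real.cos (2 * π / 3) = -(1/2 : ℝ) := by
        have : (2 * π / 3 : ℝ) = π - π / 3 := by ring
        rw [this, Real.cos_pi_sub, Real.cos_pi_div_three]
      rw [this]; push_cast at key; linarith
    have h3mem : (2 * π / 3 : ℝ) ∈ Set.Icc 0 π := by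
      constructor <;> [positivity; linarith]
    have := Real.injOn_cos hmem h3mem hc
    right; right; left
    refine aux_angle_eq n 3 hnpos (by norm_num) ?_
    rw [this]; norm_num
  · -- t = 0 : cos θ = 0 = cos (π/2), n = 4
    have hc : Real.cos (2 * π / n) = Real.cos (π / 2) := by
      rw [Real.cos_pi_div_two]; push_cast at key; linarith
    have h4mem : (π / 2 : ℝ) ∈ Set.Icc 0 π := by
      constructor <;> [positivity; linarith]
    have := Real.injOn_cos hmem h4mem hc
    right; right; right; left
    refine aux_angle_eq n 4 hnpos (by norm_num) ?_
    rw [this]; push_cast; ring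
  · -- t = 1 : cos θ = 1/2 = cos (π/3), n = 6
    have hc : Real.cos (2 * π / n) = Real.cos (π / 3) := by
      rw [Real.cos_pi_div_three]; push_cast at key; linarith
    have h6mem : (π / 3 : ℝ) ∈ Set.Icc 0 π := by
      constructor <;> [positivity; linarith]
    have := Real.injOn_cos hmem h6mem hc
    right; right; right; right
    refine aux_angle_eq n 6 hnpos (by norm_num) ?_
    rw [this]; push_cast; ring
  · -- t = 2 : cos θ = 1 = cos 0, so θ = 0, contradiction
    exfalso
    have hc : Real.cos (2 * π / n) = Real.cos 0 := by
      rw [Real.cos_zero]; push_cast at key; linarith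
    have h0mem : (0 : ℝ) ∈ Set.Icc 0 π := ⟨le_refl 0, le_of_lt hπ⟩
    have := Real.injOn_cos hmem h0mem hc
    linarith [hθpos, this]
end

section
/- For a > b > 0 with a/b irrational, let r₀ = a, r₁ = b, r_{n+1} = r_{n-1} - ⌊r_{n-1}/r_n⌋·r_n. Then (1/a)·∑_{n=0}^∞ r_n ≤ τ², where τ = (1+√5)/2, with equality when a/b = τ. -/
/-- Worst-case bound for the remainder series of the real Euclidean
algorithm: with `τ = (1+√5)/2`, for `a > b > 0` and `a/b` irrational,
`(1/a)·∑ r_n ≤ τ²`, with equality when `a/b = τ`. -/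
theorem euclidean_remainders_golden_bound
    (τ : ℝ) (hτ : τ = (1 + Real.sqrt 5) / 2)
    (a b : ℝ) (hb : 0 < b) (hab : b < a) (hirr : Irrational (a / b))
    (r : ℕ → ℝ) (h0 : r 0 = a) (h1 : r 1 = b)
    (hrec : ∀ n : ℕ, r (n + 2) = r n - (⌊r n / r (n + 1)⌋ : ℝ) * r (n + 1)) :
    (1 / a) * (∑' n : ℕ, r n) ≤ τ ^ 2 ∧
    (a / b = τ → (1 / a) * (∑' n : ℕ, r n) = τ ^ 2) := by
  have ha : 0 < a := hb.trans hab
  have h5 : Real.sqrt 5 ^ 2 = 5 := Real.sq_sqrt (by norm_num)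
  have hs5 : 2 < Real.sqrt 5 := by nlinarith [Real.sqrt_nonneg 5]
  have hs5' : Real.sqrt 5 < 3 := by nlinarith [Real.sqrt_nonneg 5]
  have hτ1 : 1 < τ := by rw [hτ]; linarith
  have hτ0 : (0:ℝ) ≤ τ := by linarith
  have hτlt2 : τ < 2 := by rw [hτ]; linarith
  have hτ2 : τ ^ 2 = τ + 1 := by rw [hτ]; nlinarith
  -- inverse of an irrational is irrational
  have irr_inv : ∀ y : ℝ, Irrational y → Irrational y⁻¹ := by
    intro y hy
    rintro ⟨q, hq⟩
    refine hy ⟨q⁻¹, ?_⟩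
    have hy0 : y ≠ 0 := by
      intro h; exact hy ⟨0, by simp [h]⟩
    rw [Rat.cast_inv, hq, inv_inv]
  -- invariant
  have inv : ∀ n, 0 < r (n+1) ∧ r (n+1) < r n ∧ Irrational (r n / r (n+1)) := by
    intro n
    induction n with
    | zero => exact ⟨by rw [h1]; exact hb, by rw [h0, h1]; exact hab, by rwa [h0, h1]⟩
    | succ n ih =>
      obtain ⟨hp, hlt, hi⟩ := ih
      have hx1 : 1 < r n / r (n+1) := (one_lt_div hp).mpr hlt
      have hfr : r (n+2) = Int.fract (r n / r (n+1)) * r (n+1) := by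
        rw [hrec n, Int.fract, sub_mul, div_mul_cancel₀ _ hp.ne']
      have hfrpos : 0 < Int.fract (r n / r (n+1)) := Int.fract_pos.mpr (hi.ne_int _)
      have hfrlt : Int.fract (r n / r (n+1)) < 1 := Int.fract_lt_one _
      have hp2 : 0 < r (n+2) := by rw [hfr]; positivity
      have hlt2 : r (n+2) < r (n+1) := by
        rw [hfr]; nlinarith
      refine ⟨hp2, hlt2, ?_⟩
      have hratio : r (n+1) / r (n+2) = (Int.fract (r n / r (n+1)))⁻¹ := by
        rw [hfr, mul_comm, ← div_div, div_self hp.ne', one_div]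
      rw [hratio]
      exact irr_inv _ (by rw [Int.fract]; exact Irrational.sub_intCast hi _)
  have hpos : ∀ n, 0 < r n := by
    intro n
    cases n with
    | zero => rw [h0]; exact ha
    | succ n => exact (inv n).1
  have hdec : ∀ n, r (n+1) < r n := fun n => (inv n).2.1
  have hq : ∀ n, (1:ℝ) ≤ (⌊r n / r (n+1)⌋ : ℝ) := by
    intro n
    have hx1 : 1 < r n / r (n+1) := (one_lt_div (hpos (n+1))).mpr (hdec n)
    exact_mod_cast Int.le_floor.mpr (by exact_mod_cast hx1.le)
  have hsub : ∀ n, r (n+2) ≤ r n - r (n+1) := by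
    intro n
    rw [hrec n]
    nlinarith [hq n, hpos (n+1)]
  have hpair : ∀ n, r (n+2) + r (n+3) ≤ r (n+1) := by
    intro n
    have := hsub (n+1)
    linarith
  -- main partial-sum bound
  have main : ∀ j m n, m ≤ n + j → (∑ k ∈ Finset.Ico n m, r k) ≤ τ * (r n + r (n+1)) := by
    intro j
    induction j using Nat.strong_induction_on with
    | _ j ih =>
      intro m n hmn
      rcases le_or_gt m n with h | h
      · rw [Finset.Ico_eq_empty (by omega)]
        simp only [Finset.sum_empty]
        nlinarith [hpos n, hpos (n+1)]
      · rcases le_or_gt m (n+1) with h2 | h2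
        · have hm : m = n + 1 := le_antisymm h2 h
          subst hm
          rw [Nat.Ico_succ_singleton, Finset.sum_singleton]
          nlinarith [hpos n, hpos (n+1)]
        · have hj2 : 2 ≤ j := by omega
          have hsplit1 : ∑ k ∈ Finset.Ico n m, r k
              = r n + ∑ k ∈ Finset.Ico (n+1) m, r k :=
            Finset.sum_eq_sum_Ico_succ_bot h r
          rcases le_total (r n) (τ * r (n+1)) with hc | hc
          · have hS := ih (j-1) (by omega) m (n+1) (by omega)
            have h2s := hsub n
            rw [hsplit1]
            nlinarith [mul_le_mul_of_nonneg_left h2s hτ0]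
          · have hsplit2 : ∑ k ∈ Finset.Ico (n+1) m, r k
                = r (n+1) + ∑ k ∈ Finset.Ico (n+2) m, r k :=
              Finset.sum_eq_sum_Ico_succ_bot h2 r
            have hS := ih (j-2) (by omega) m (n+2) (by omega)
            have hp2 := hpair n
            rw [hsplit1, hsplit2]
            nlinarith [mul_le_mul_of_nonneg_left hp2 hτ0,
              mul_le_mul_of_nonneg_left hc (by linarith : (0:ℝ) ≤ τ - 1),
              hpos n, hpos (n+1)]
  -- finset bound
  have bound : ∀ s : Finset ℕ, ∑ k ∈ s, r k ≤ τ ^ 2 * a := by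
    intro s
    obtain ⟨m, hm⟩ := s.exists_nat_subset_range
    have h1' : ∑ k ∈ s, r k ≤ ∑ k ∈ Finset.range m, r k :=
      Finset.sum_le_sum_of_subset_of_nonneg hm (fun i _ _ => (hpos i).le)
    have hτa : (0:ℝ) ≤ τ ^ 2 * a := by positivity
    rcases Nat.eq_zero_or_pos m with rfl | hm0
    · simp only [Finset.range_zero, Finset.sum_empty] at h1'
      linarith
    · have hsplit : ∑ k ∈ Finset.range m, r k = r 0 + ∑ k ∈ Finset.Ico 1 m, r k := by
        rw [Finset.range_eq_Ico]
        exact Finset.sum_eq_sum_Ico_succ_bot hm0 r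
      have hS := main m m 1 (by omega)
      have h2 : r 2 ≤ a - b := by have := hsub 0; rwa [h0, h1] at this
      have hra : r 1 + r 2 ≤ a := by rw [h1]; linarith
      have hτra := mul_le_mul_of_nonneg_left hra hτ0
      rw [hsplit, h0] at h1'
      nlinarith [hS, h1', hτra]
  refine ⟨?_, ?_⟩
  · by_cases hsum : Summable r
    · have hts := Summable.tsum_le_of_sum_le hsum bound
      calc (1 / a) * (∑' n, r n) ≤ (1 / a) * (τ ^ 2 * a) :=
            mul_le_mul_of_nonneg_left hts (by positivity)
        _ = τ ^ 2 := by rw [mul_comm (τ ^ 2) a, one_div, inv_mul_cancel_left₀ ha.ne']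
    · rw [tsum_eq_zero_of_not_summable hsum]
      have : (0:ℝ) ≤ τ ^ 2 := by positivity
      simpa using this
  · intro heq
    have hτne : τ ≠ 0 := by linarith
    have hane : a ≠ 0 := ne_of_gt ha
    have hab' : a = τ * b := by
      rw [← heq, div_mul_cancel₀ a hb.ne']
    have hb' : b = a * τ⁻¹ := by
      rw [hab', mul_comm τ b, mul_assoc, mul_inv_cancel₀ hτne, mul_one]
    have hxpos : (0:ℝ) < τ⁻¹ := by positivity
    have hxlt : τ⁻¹ < 1 := by
      rw [inv_lt_one_iff₀]; right; exact hτ1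
    have hfloorτ : ⌊τ⌋ = 1 :=
      Int.floor_eq_iff.mpr ⟨by push_cast; linarith, by push_cast; linarith⟩
    have hinvτ : τ⁻¹ = τ - 1 := by
      have h2 : τ * τ⁻¹ = τ * (τ - 1) := by
        rw [mul_inv_cancel₀ hτne]; ring_nf; linarith
      exact mul_left_cancel₀ hτne h2
    have hxsq : 1 - τ⁻¹ = τ⁻¹ ^ 2 := by
      rw [hinvτ]; ring_nf; linarith
    have hgeo : ∀ n, r n = a * τ⁻¹ ^ n ∧ r (n+1) = a * τ⁻¹ ^ (n+1) := by
      intro n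
      induction n with
      | zero => exact ⟨by simp [h0], by simp [h1, hb']⟩
      | succ n ih =>
        obtain ⟨hn, hn1⟩ := ih
        refine ⟨hn1, ?_⟩
        have hxne : τ⁻¹ ≠ 0 := ne_of_gt hxpos
        have hrτ : r n = τ * r (n+1) := by
          rw [hn, hn1]
          calc a * τ⁻¹ ^ n = (τ * τ⁻¹) * (a * τ⁻¹ ^ n) := by
                rw [mul_inv_cancel₀ hτne, one_mul]
            _ = τ * (a * τ⁻¹ ^ (n+1)) := by rw [pow_succ]; ring
        have hratio : r n / r (n+1) = τ := by
          rw [hrτ, mul_div_assoc, div_self (hpos (n+1)).ne', mul_one]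
        have : r (n+2) = r n - 1 * r (n+1) := by
          rw [hrec n, hratio, hfloorτ]; norm_num
        rw [this, hn, hn1]
        calc a * τ⁻¹ ^ n - 1 * (a * τ⁻¹ ^ (n+1))
            = a * τ⁻¹ ^ n * (1 - τ⁻¹) := by ring
          _ = a * τ⁻¹ ^ n * τ⁻¹ ^ 2 := by rw [hxsq]
          _ = a * τ⁻¹ ^ (n+1+1) := by ring
    have hr : ∀ n, r n = a * τ⁻¹ ^ n := fun n => (hgeo n).1
    rw [tsum_congr hr, tsum_mul_left,
      tsum_geometric_of_lt_one hxpos.le hxlt]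
    have hinv : (1 - τ⁻¹)⁻¹ = τ ^ 2 := by
      rw [hxsq, ← inv_pow, inv_inv]
    rw [hinv, one_div, inv_mul_cancel_left₀ hane]
end

section
/- There is no finite subgroup G of O(3) containing the full octahedral group (the symmetry group of the cube, of order 48) as a subgroup of index 2 such that G contains it properly with all rotations in G being 1-, 2-, 3-, 4- or 6-fold; in particular, no lattice in ℝ³ has a point group of order 96 containing the octahedral group. -/
namespace NoIdx2

abbrev Mat := Matrix (Fin 3) (Fin 3) ℝ

def eps (b : Bool) : ℝ := if b then 1 else -1

lemma eps_mul (a b : Bool) : eps a * eps b = eps (a == b) := by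
  cases a <;> cases b <;> norm_num [eps]

lemma eps_ne_zero (b : Bool) : eps b ≠ 0 := by cases b <;> norm_num [eps]

lemma abs_eps (b : Bool) : |eps b| = 1 := by cases b <;> norm_num [eps]

lemma eps_inj : Function.Injective eps := by
  intro a b h; cases a <;> cases b <;> simp_all [eps] <;> norm_num at h

/-- the signed permutation matrix with column `j` equal to `eps (s j) • e (σ j)`. -/
def M (p : Equiv.Perm (Fin 3) × (Fin 3 → Bool)) : Mat :=
  Matrix.of fun i j => if i = p.1 j then eps (p.2 j) else 0

def pmul (p q : Equiv.Perm (Fin 3) × (Fin 3 → Bool)) : Equiv.Perm (Fin 3) × (Fin 3 → Bool) :=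
  (p.1 * q.1, fun j => p.2 (q.1 j) == q.2 j)

def pone : Equiv.Perm (Fin 3) × (Fin 3 → Bool) := (1, fun _ => true)

def pinv (p : Equiv.Perm (Fin 3) × (Fin 3 → Bool)) : Equiv.Perm (Fin 3) × (Fin 3 → Bool) :=
  (p.1⁻¹, fun j => p.2 (p.1⁻¹ j))

lemma M_mul (p q : Equiv.Perm (Fin 3) × (Fin 3 → Bool)) : M p * M q = M (pmul p q) := by
  ext i j
  simp only [Matrix.mul_apply, M, pmul, Matrix.of_apply]
  rw [Finset.sum_eq_single (q.1 j)]
  · simp [eps_mul]; split_ifs with h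
    · exact (if_pos h).symm
    · exact (if_neg h).symm
  · intro k _ hk; simp [if_neg hk]
  · simp

lemma M_one : M pone = 1 := by
  ext i j
  simp only [M, pone, Matrix.of_apply, Equiv.Perm.one_apply, Matrix.one_apply, eps]
  by_cases h : i = j <;> simp [h]

lemma M_inj : Function.Injective M := by
  intro p q h
  have h' : ∀ i j, M p i j = M q i j := fun i j => by rw [h]
  have hσ : p.1 = q.1 := by
    refine Equiv.ext fun j => ?_
    have := h' (p.1 j) j
    simp only [M, Matrix.of_apply, if_pos rfl] at this
    by_contra hne
    rw [if_neg hne] at this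
    exact eps_ne_zero _ this
  have hs : p.2 = q.2 := by
    funext j
    have := h' (q.1 j) j
    simp only [M, Matrix.of_apply, hσ, if_pos rfl] at this
    exact eps_inj this
  exact Prod.ext hσ hs

lemma star_M (p : Equiv.Perm (Fin 3) × (Fin 3 → Bool)) : star (M p) = M (pinv p) := by
  ext i j
  simp only [Matrix.star_apply, M, pinv, Matrix.of_apply, star_trivial]
  by_cases h : j = p.1 i
  · rw [if_pos h]
    split_ifs with hh
    · refine Eq.trans ?_ (if_pos hh).symm; rw [hh]
    · exact absurd (by rw [h]; simp) hh
  · rw [if_neg h]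
    split_ifs with hh
    · exact absurd (by rw [hh]; simp) h
    · exact (if_neg hh).symm

lemma pmul_pinv (p : _) : pmul p (pinv p) = pone := by
  simp only [pmul, pinv, pone, mul_inv_cancel]
  refine Prod.ext rfl ?_
  funext j; simp

lemma pinv_pmul (p : _) : pmul (pinv p) p = pone := by
  simp only [pmul, pinv, pone, inv_mul_cancel]
  refine Prod.ext rfl ?_
  funext j; simp

lemma M_mem_orthogonal (p : _) : M p ∈ Matrix.orthogonalGroup (Fin 3) ℝ := by
  refine Matrix.mem_unitaryGroup_iff.mpr ?_
  rw [star_M, M_mul, pmul_pinv, M_one]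



def cube : Set (Fin 3 → ℝ) := {v | ∀ i, |v i| ≤ 1}

lemma tri (a b c : ℝ) (h1 : a^2+b^2+c^2 = 1) (h2 : |a|+|b|+|c| ≤ 1) :
    (a = 0 ∨ a^2 = 1) ∧ (b = 0 ∨ b^2 = 1) ∧ (c = 0 ∨ c^2 = 1) := by
  have key : ∀ x y z : ℝ, x^2+y^2+z^2 = 1 → |x|+|y|+|z| ≤ 1 → x = 0 ∨ x^2 = 1 := by
    intro x y z e1 e2
    have hy : y^2 ≤ |y| := by nlinarith [sq_abs y, abs_nonneg y, sq_nonneg x, sq_nonneg z, abs_nonneg x, abs_nonneg z]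
    have hz : z^2 ≤ |z| := by nlinarith [sq_abs z, abs_nonneg z, sq_nonneg x, sq_nonneg y, abs_nonneg x, abs_nonneg y]
    have hx : x^2 ≤ |x| := by nlinarith [sq_abs x, abs_nonneg x, sq_nonneg y, sq_nonneg z, abs_nonneg y, abs_nonneg z]
    have ea : |x| = x^2 := le_antisymm (by linarith) hx
    have : |x| * (|x| - 1) = 0 := by nlinarith [sq_abs x]
    rcases mul_eq_zero.mp this with h | h
    · exact Or.inl (abs_eq_zero.mp h)
    · right; have : |x| = 1 := by linarith
      calc x^2 = |x|^2 := (sq_abs x).symm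
        _ = 1 := by rw [this]; norm_num
  exact ⟨key a b c h1 h2, key b a c (by linarith) (by linarith), key c a b (by linarith) (by linarith)⟩

lemma row_sum_sq (A : Mat) (hA : A ∈ Matrix.orthogonalGroup (Fin 3) ℝ) (i i' : Fin 3) :
    ∑ j, A i j * A i' j = if i = i' then 1 else 0 := by
  have h := Matrix.mem_unitaryGroup_iff.mp hA
  have h2 : (A * star A) i i' = (1 : Mat) i i' := by rw [h]
  rw [Matrix.mul_apply] at h2
  simp only [Matrix.star_apply, star_trivial, Matrix.one_apply] at h2
  exact h2

lemma row_abs_sum (A : Mat) (hsub : A.mulVec '' cube ⊆ cube) (i : Fin 3) :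
    ∑ j, |A i j| ≤ 1 := by
  set v := (fun j => if A i j < 0 then (-1:ℝ) else 1) with hv
  have hvc : v ∈ cube := by
    intro k; by_cases h : A i k < 0 <;> simp [hv, h]
  have := hsub ⟨v, hvc, rfl⟩ i
  have hval : A.mulVec v i = ∑ j, |A i j| := by
    simp only [Matrix.mulVec, dotProduct]
    refine Finset.sum_congr rfl fun j _ => ?_
    by_cases h : A i j < 0
    · simp [hv, h, abs_of_neg h]
    · simp [hv, h, abs_of_nonneg (not_lt.mp h)]
  rw [hval] at this
  calc ∑ j, |A i j| ≤ abs (∑ j, |A i j|) := le_abs_self _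
    _ ≤ 1 := this

lemma row_structure (A : Mat) (hA : A ∈ Matrix.orthogonalGroup (Fin 3) ℝ)
    (hsub : A.mulVec '' cube ⊆ cube) (i : Fin 3) :
    ∃ j, (∀ j', j' ≠ j → A i j' = 0) ∧ A i j ^ 2 = 1 := by
  have h1 : A i 0 ^2 + A i 1 ^2 + A i 2 ^2 = 1 := by
    have := row_sum_sq A hA i i
    rw [if_pos rfl, Fin.sum_univ_three] at this
    nlinarith [this]
  have h2 : |A i 0| + |A i 1| + |A i 2| ≤ 1 := by
    have := row_abs_sum A hsub i
    rwa [Fin.sum_univ_three] at this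
  obtain ⟨c0, c1, c2⟩ := tri _ _ _ h1 h2
  rcases c0 with c0 | c0 <;> rcases c1 with c1 | c1 <;> rcases c2 with c2 | c2
  · exfalso; rw [c0, c1, c2] at h1; norm_num at h1
  · exact ⟨2, fun j' hj' => by fin_cases j' <;> simp_all, c2⟩
  · exact ⟨1, fun j' hj' => by fin_cases j' <;> simp_all [show A i 2 = 0 from by nlinarith], by assumption⟩
  · exfalso; nlinarith
  · exact ⟨0, fun j' hj' => by fin_cases j' <;> simp_all [show A i 1 = 0 ∧ A i 2 = 0 from by constructor <;> nlinarith], c0⟩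
  · exfalso; nlinarith
  · exfalso; nlinarith
  · exfalso; nlinarith


lemma M_mulVec (p : Equiv.Perm (Fin 3) × (Fin 3 → Bool)) (v : Fin 3 → ℝ) :
    (M p).mulVec v = fun i => eps (p.2 (p.1⁻¹ i)) * v (p.1⁻¹ i) := by
  funext i
  simp only [Matrix.mulVec, dotProduct, M, Matrix.of_apply]
  rw [Finset.sum_eq_single (p.1⁻¹ i)]
  · simp
  · intro k _ hk
    rw [if_neg, zero_mul]
    intro h; exact hk (by rw [h]; simp)
  · simp

lemma M_mulVec_mem (p : Equiv.Perm (Fin 3) × (Fin 3 → Bool)) {v : Fin 3 → ℝ} (hv : v ∈ cube) :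
    (M p).mulVec v ∈ cube := by
  rw [M_mulVec]
  intro i
  rw [abs_mul, abs_eps, one_mul]
  exact hv _

lemma rows_to_p (A : Mat) (hA : A ∈ Matrix.orthogonalGroup (Fin 3) ℝ)
    (ρ : Fin 3 → Fin 3) (h0 : ∀ i j', j' ≠ ρ i → A i j' = 0)
    (h1 : ∀ i, A i (ρ i) ^ 2 = 1) : ∃ p, A = M p := by
  have hinj : Function.Injective ρ := by
    intro i i' h
    by_contra hne
    have hs := row_sum_sq A hA i i'
    rw [if_neg hne, Finset.sum_eq_single (ρ i)] at hs
    · have e1 := h1 i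
      have e2 := h1 i'
      rw [← h] at e2
      nlinarith [hs, e1, e2]
    · intro k _ hk
      rw [h0 i k hk, zero_mul]
    · simp
  have hbij := Finite.injective_iff_bijective.mp hinj
  classical
  let e := Equiv.ofBijective ρ hbij
  refine ⟨(e.symm, fun j => decide (0 < A (e.symm j) j)), ?_⟩
  ext i j
  simp only [M, Matrix.of_apply]
  by_cases h : i = e.symm j
  · rw [if_pos h]
    subst h
    have hj : ρ (e.symm j) = j := e.apply_symm_apply j
    have h1' := h1 (e.symm j)
    rw [hj] at h1'
    have hz : (A (e.symm j) j - 1) * (A (e.symm j) j + 1) = 0 := by linear_combination h1'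
    rcases mul_eq_zero.mp hz with h2 | h2
    · have hx : A (e.symm j) j = 1 := by linarith
      rw [hx]
      norm_num [eps]
    · have hx : A (e.symm j) j = -1 := by linarith
      rw [hx]
      norm_num [eps]
  · rw [if_neg h]
    apply h0
    intro hj
    apply h
    rw [hj]
    exact (e.symm_apply_apply i).symm

lemma exists_p (A : Mat) (hA : A ∈ Matrix.orthogonalGroup (Fin 3) ℝ)
    (hsub : A.mulVec '' cube ⊆ cube) : ∃ p, A = M p := by
  choose ρ h0 h1 using row_structure A hA hsub
  exact rows_to_p A hA ρ h0 h1

lemma mem_Oct_iff (A : Mat) :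
    (A ∈ Matrix.orthogonalGroup (Fin 3) ℝ ∧ A.mulVec '' cube = cube) ↔ ∃ p, A = M p := by
  constructor
  · rintro ⟨h1, h2⟩
    exact exists_p A h1 h2.le
  · rintro ⟨p, rfl⟩
    refine ⟨M_mem_orthogonal p, ?_⟩
    refine Set.Subset.antisymm (fun w hw => ?_) (fun v hv => ?_)
    · obtain ⟨v, hv, rfl⟩ := hw
      exact M_mulVec_mem p hv
    · refine ⟨(M (pinv p)).mulVec v, M_mulVec_mem _ hv, ?_⟩
      rw [Matrix.mulVec_mulVec, M_mul, pmul_pinv, M_one, Matrix.one_mulVec]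

lemma ncard_Oct : Set.ncard {A : Mat | ∃ p, A = M p} = 48 := by
  have hr : {A : Mat | ∃ p, A = M p} = Set.range M := by
    ext A
    simp [Set.mem_range, eq_comm]
  rw [hr, ← Nat.card_coe_set_eq,
    Nat.card_congr (Equiv.ofInjective M M_inj).symm, Nat.card_eq_fintype_card]
  simp [Fintype.card_perm]
  rfl


lemma order4 (p : Equiv.Perm (Fin 3) × (Fin 3 → Bool)) (h2 : pmul p p ≠ pone)
    (h4 : pmul (pmul p p) (pmul p p) = pone) :
    ∃ a b c : Fin 3, p.1 b = c ∧ p.1 c = b ∧ p.2 b ≠ p.2 c ∧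
      ∀ i : Fin 3, i = a ∨ i = b ∨ i = c := by
  revert h4 h2
  revert p
  decide

/-- the 90 degree rotation about axis `k` (as a signed permutation pair). -/
def r (k : Fin 3) : Equiv.Perm (Fin 3) × (Fin 3 → Bool) :=
  (Equiv.swap (k + 1) (k + 2), fun j => decide (j ≠ k + 1))

lemma r_facts : ∀ k : Fin 3, (r k).1 k = k ∧ (r k).2 k = true ∧
    pmul (r k) (r k) ≠ pone ∧
    pmul (pmul (r k) (r k)) (pmul (r k) (r k)) = pone := by
  decide

def OctS : Set Mat := {A : Mat | ∃ p, A = M p}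

lemma normalizer (g : Mat) (hg : g ∈ Matrix.orthogonalGroup (Fin 3) ℝ)
    (hconj : ∀ R ∈ OctS, ∃ C ∈ OctS, g * R = C * g) : g ∈ OctS := by
  have hg1 : g * star g = 1 := Matrix.mem_unitaryGroup_iff.mp hg
  have hg2 : star g * g = 1 := Matrix.mem_unitaryGroup_iff'.mp hg
  -- column structure of `g`
  have hcol : ∀ k : Fin 3, ∃ a : Fin 3, ∀ i, i ≠ a → g i k = 0 := by
    intro k
    obtain ⟨hr1, hr2, hr3, hr4⟩ := r_facts k
    obtain ⟨C, ⟨q, rfl⟩, hCg⟩ := hconj (M (r k)) ⟨r k, rfl⟩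
    have key2 : g * (M (r k) * M (r k)) = (M q * M q) * g := by
      rw [← mul_assoc, hCg, mul_assoc, hCg, ← mul_assoc]
    have key4 : g * ((M (r k) * M (r k)) * (M (r k) * M (r k))) =
        ((M q * M q) * (M q * M q)) * g := by
      rw [← mul_assoc, key2, mul_assoc, key2, ← mul_assoc]
    have hq2 : pmul q q ≠ pone := by
      intro h
      have hC2 : M q * M q = 1 := by rw [M_mul, h, M_one]
      have e2 : g * (M (r k) * M (r k)) = g := by rw [key2, hC2, one_mul]
      have hRR : M (r k) * M (r k) = 1 := by
        calc M (r k) * M (r k) = (star g * g) * (M (r k) * M (r k)) := by rw [hg2, one_mul]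
          _ = star g * (g * (M (r k) * M (r k))) := by rw [mul_assoc]
          _ = star g * g := by rw [e2]
          _ = 1 := hg2
      exact hr3 (M_inj (by rw [← M_mul, hRR, M_one]))
    have hq4 : pmul (pmul q q) (pmul q q) = pone := by
      have h1 : (M (r k) * M (r k)) * (M (r k) * M (r k)) = 1 := by
        rw [M_mul, M_mul, hr4, M_one]
      have e4 : g * ((M (r k) * M (r k)) * (M (r k) * M (r k))) = g := by
        rw [h1, mul_one]
      have e5 : ((M q * M q) * (M q * M q)) * g = g := by rw [← key4, e4]
      have hQQ : (M q * M q) * (M q * M q) = 1 := by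
        calc (M q * M q) * (M q * M q)
            = ((M q * M q) * (M q * M q)) * (g * star g) := by rw [hg1, mul_one]
          _ = (((M q * M q) * (M q * M q)) * g) * star g := (mul_assoc (M q * M q * (M q * M q)) g (star g)).symm
          _ = g * star g := by rw [e5]
          _ = 1 := hg1
      apply M_inj
      rw [← M_mul, ← M_mul, hQQ, M_one]
    obtain ⟨a, b, c, qb, qc, qs, hcover⟩ := order4 q hq2 hq4
    -- the fixed column
    set x : Fin 3 → ℝ := fun i => g i k with hx
    have hfix : ∀ i, eps (q.2 (q.1⁻¹ i)) * x (q.1⁻¹ i) = x i := by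
      intro i
      have e1 : (M q * g) i k = (g * M (r k)) i k := by rw [hCg]
      rw [Matrix.mul_apply, Matrix.mul_apply] at e1
      have e2 : ∑ j, g i j * M (r k) j k = g i k := by
        rw [Finset.sum_eq_single k]
        · simp [M, hr1, hr2, eps]
        · intro j _ hj
          rw [show M (r k) j k = 0 from ?_, mul_zero]
          simp only [M, Matrix.of_apply, hr1]
          rw [if_neg hj]
        · simp
      have e3 : ∑ j, M q i j * g j k = eps (q.2 (q.1⁻¹ i)) * x (q.1⁻¹ i) := by
        rw [Finset.sum_eq_single (q.1⁻¹ i)]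
        · simp [M, hx]
        · intro j _ hj
          rw [show M q i j = 0 from ?_, zero_mul]
          simp only [M, Matrix.of_apply]
          rw [if_neg]
          intro h; exact hj (by rw [h]; simp)
        · simp
      rw [e3] at e1
      rw [e1, e2]
    have hinvb : q.1⁻¹ b = c := by
      rw [← qc]; simp
    have hinvc : q.1⁻¹ c = b := by
      rw [← qb]; simp
    have hb0 : x b = 0 := by
      have f1 := hfix b
      have f2 := hfix c
      rw [hinvb] at f1
      rw [hinvc] at f2
      rw [← f2, ← mul_assoc, eps_mul] at f1
      have : (q.2 c == q.2 b) = false := by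
        cases hqc : q.2 c <;> cases hqb : q.2 b <;> simp_all
      rw [this] at f1
      simp only [eps] at f1
      norm_num at f1
      linarith
    have hc0 : x c = 0 := by
      have f2 := hfix c
      rw [hinvc, hb0, mul_zero] at f2
      exact f2.symm
    refine ⟨a, fun i hi => ?_⟩
    rcases hcover i with h | h | h
    · exact absurd h hi
    · rw [h]; exact hb0
    · rw [h]; exact hc0
  choose a ha using hcol
  -- pass to the transpose
  have hB : star g ∈ Matrix.orthogonalGroup (Fin 3) ℝ := Unitary.star_mem hg
  have hB0 : ∀ k i, i ≠ a k → star g k i = 0 := by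
    intro k i hi
    simp only [Matrix.star_apply, star_trivial]
    exact ha k i hi
  have hB1 : ∀ k, star g k (a k) ^ 2 = 1 := by
    intro k
    have hs := row_sum_sq (star g) hB k k
    rw [if_pos rfl, Finset.sum_eq_single (a k)] at hs
    · nlinarith [hs]
    · intro j _ hj
      rw [hB0 k j hj, zero_mul]
    · simp
  obtain ⟨p, hp⟩ := rows_to_p (star g) hB a hB0 hB1
  refine ⟨pinv p, ?_⟩
  rw [← star_M, ← hp, star_star]

lemma one_mem_OctS : (1 : Mat) ∈ OctS := ⟨pone, M_one.symm⟩

lemma main (S : Set Mat) (hSorth : S ⊆ Matrix.orthogonalGroup (Fin 3) ℝ)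
    (hmul : ∀ A ∈ S, ∀ B ∈ S, A * B ∈ S) (hfin : S.Finite)
    (hsub : OctS ⊆ S) (hne : OctS ≠ S)
    (hcard : Nat.card S = 2 * Nat.card OctS) : False := by
  rw [Nat.card_coe_set_eq, Nat.card_coe_set_eq] at hcard
  obtain ⟨g, hgS, hgO⟩ := Set.exists_of_ssubset (hsub.ssubset_of_ne hne)
  have hgo : g ∈ Matrix.orthogonalGroup (Fin 3) ℝ := hSorth hgS
  have hg1 : g * star g = 1 := Matrix.mem_unitaryGroup_iff.mp hgo
  have hg2 : star g * g = 1 := Matrix.mem_unitaryGroup_iff'.mp hgo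
  have hOfin : OctS.Finite := hfin.subset hsub
  -- left and right cosets avoid OctS
  have hL : (fun R => g * R) '' OctS ⊆ S \ OctS := by
    rintro - ⟨R, ⟨p, rfl⟩, rfl⟩
    refine ⟨hmul g hgS _ (hsub ⟨p, rfl⟩), fun hmem => hgO ?_⟩
    have : g = (g * M p) * M (pinv p) := by
      rw [mul_assoc, M_mul, pmul_pinv, M_one, mul_one]
    rw [this]
    obtain ⟨q, hq⟩ := hmem
    simp only at hq
    rw [hq, M_mul]
    exact ⟨_, rfl⟩
  have hRt : (fun R => R * g) '' OctS ⊆ S \ OctS := by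
    rintro - ⟨R, ⟨p, rfl⟩, rfl⟩
    refine ⟨hmul _ (hsub ⟨p, rfl⟩) g hgS, fun hmem => hgO ?_⟩
    have : g = M (pinv p) * (M p * g) := by
      rw [← mul_assoc, M_mul, pinv_pmul, M_one, one_mul]
    rw [this]
    obtain ⟨q, hq⟩ := hmem
    simp only at hq
    rw [hq, M_mul]
    exact ⟨_, rfl⟩
  have hLinj : Function.Injective (fun R : Mat => g * R) := by
    intro a b h
    simp only at h
    calc a = (star g * g) * a := by rw [hg2, one_mul]
      _ = star g * (g * a) := by rw [mul_assoc]
      _ = star g * (g * b) := by rw [h]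
      _ = (star g * g) * b := by rw [mul_assoc]
      _ = b := by rw [hg2, one_mul]
  have hRinj : Function.Injective (fun R : Mat => R * g) := by
    intro a b h
    simp only at h
    calc a = a * (g * star g) := by rw [hg1, mul_one]
      _ = (a * g) * star g := by rw [mul_assoc]
      _ = (b * g) * star g := by rw [h]
      _ = b * (g * star g) := by rw [mul_assoc]
      _ = b := by rw [hg1, mul_one]
  have hdiff : (S \ OctS).ncard = OctS.ncard := by
    rw [Set.ncard_diff hsub hOfin, hcard]
    omega
  have hLcard : ((fun R => g * R) '' OctS).ncard = OctS.ncard :=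
    Set.ncard_image_of_injective _ hLinj
  have hRcard : ((fun R => R * g) '' OctS).ncard = OctS.ncard :=
    Set.ncard_image_of_injective _ hRinj
  have hLeq : (fun R => g * R) '' OctS = S \ OctS :=
    Set.eq_of_subset_of_ncard_le hL (by rw [hdiff, hLcard]) hfin.diff
  have hReq : (fun R => R * g) '' OctS = S \ OctS :=
    Set.eq_of_subset_of_ncard_le hRt (by rw [hdiff, hRcard]) hfin.diff
  have hconj : ∀ R ∈ OctS, ∃ C ∈ OctS, g * R = C * g := by
    intro R hR
    have : g * R ∈ (fun R => R * g) '' OctS := by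
      rw [hReq, ← hLeq]
      exact ⟨R, hR, rfl⟩
    obtain ⟨C, hC, hCe⟩ := this
    exact ⟨C, hC, hCe.symm⟩
  exact hgO (normalizer g hgo hconj)

lemma ncard_OctS : OctS.ncard = 48 := ncard_Oct

end NoIdx2

/-- There is no finite subgroup of `O(3)` containing the full octahedral group
(the symmetry group of the cube, of order 48) properly as a subgroup of
index 2 such that all rotations in it are 1-, 2-, 3-, 4- or 6-fold; in
particular, no lattice in `ℝ³` has a point group of order 96 containing the
full octahedral group. -/
theorem no_index_two_crystallographic_supergroup_of_octahedral
    (cube : Set (Fin 3 → ℝ)) (hcube : cube = {v | ∀ i, |v i| ≤ 1})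
    (Oct : Set (Matrix (Fin 3) (Fin 3) ℝ))
    (hOct : Oct = {A | A ∈ Matrix.orthogonalGroup (Fin 3) ℝ ∧
                        A.mulVec '' cube = cube}) :
    (¬ ∃ G : Set (Matrix (Fin 3) (Fin 3) ℝ),
        G ⊆ Matrix.orthogonalGroup (Fin 3) ℝ ∧
        (1 : Matrix (Fin 3) (Fin 3) ℝ) ∈ G ∧
        (∀ A ∈ G, ∀ B ∈ G, A * B ∈ G) ∧
        (∀ A ∈ G, A⁻¹ ∈ G) ∧
        G.Finite ∧
        Oct ⊆ G ∧ Oct ≠ G ∧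
        Nat.card G = 2 * Nat.card Oct ∧
        (∀ A ∈ G, A.det = 1 →
          ∃ n ∈ ({1, 2, 3, 4, 6} : Set ℕ), A ^ n = 1 ∧
            ∀ m : ℕ, 0 < m → A ^ m = 1 → n ≤ m)) ∧
    (¬ ∃ (b : Fin 3 → (Fin 3 → ℝ)) (Γ P : Set _),
        LinearIndependent ℝ b ∧
        Γ = {x : Fin 3 → ℝ | ∃ c : Fin 3 → ℤ, x = ∑ i, (c i : ℝ) • b i} ∧
        P = {A : Matrix (Fin 3) (Fin 3) ℝ |
              A ∈ Matrix.orthogonalGroup (Fin 3) ℝ ∧ A.mulVec '' Γ = Γ} ∧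
        Nat.card P = 96 ∧ Oct ⊆ P) := by
  have hOS : Oct = NoIdx2.OctS := by
    rw [hOct, hcube]
    ext A
    exact NoIdx2.mem_Oct_iff A
  constructor
  · rintro ⟨G, hGorth, -, hGmul, -, hGfin, hGsub, hGne, hGcard, -⟩
    rw [hOS] at hGsub hGne hGcard
    exact NoIdx2.main G hGorth hGmul hGfin hGsub hGne hGcard
  · rintro ⟨b, Γ, P, -, -, hP, hPcard, hPsub⟩
    rw [hOS] at hPsub
    have hPorth : P ⊆ Matrix.orthogonalGroup (Fin 3) ℝ := by
      rw [hP]; intro A hA; exact hA.1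
    have hPmul : ∀ A ∈ P, ∀ B ∈ P, A * B ∈ P := by
      intro A hA B hB
      rw [hP] at hA hB ⊢
      refine ⟨mul_mem hA.1 hB.1, ?_⟩
      have hcomp : (A * B).mulVec = A.mulVec ∘ B.mulVec := by
        funext v
        exact (Matrix.mulVec_mulVec v A B).symm
      rw [hcomp, Set.image_comp, hB.2, hA.2]
    have hPfin : P.Finite := by
      apply Set.finite_of_ncard_ne_zero
      rw [← Nat.card_coe_set_eq, hPcard]
      norm_num
    have h48 : NoIdx2.OctS.ncard = 48 := NoIdx2.ncard_OctS
    have hPne : NoIdx2.OctS ≠ P := by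
      intro h
      rw [← h, Nat.card_coe_set_eq, h48] at hPcard
      norm_num at hPcard
    have hPcard' : Nat.card P = 2 * Nat.card NoIdx2.OctS := by
      rw [hPcard, Nat.card_coe_set_eq, h48]
    exact NoIdx2.main P hPorth hPmul hPfin hPsub hPne hPcard'
end
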